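/- Let p be a prime and let λ be a partition of d with at most n parts satisfying the Doty digit condition. Then λ satisfies James' condition if and only if there is no partition μ of d with at most n parts such that μ ⊳ λ (μ strictly dominates λ), μ satisfies the Doty digit condition, and c(μ) > c(λ). (This is the equivalence asserted in Remark 5.2, rederiving James' Theorem 5.1 from Doty's description of H^0(d).) -/

import Mathlib

/-- `l` is a partition of `d` with at most `n` parts: a weakly decreasing tuple
(indexed from 0, vanishing from index `n` on) of nonnegative integers summing to `d`. -/
def IsPartition (n d : ℕ) (l : ℕ → ℕ) : Prop :=
  Antitone l ∧ (∀ i, n ≤ i → l i = 0) ∧ ∑ i ∈ Finset.range n, l i = d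

/-- Doty digit condition: if the `j`-th base-`p` digit of the `i`-th part is not `p - 1`,
then the `j`-th digit of every later part is `0`. -/
def DotyCondition (p : ℕ) (l : ℕ → ℕ) : Prop :=
  ∀ i j i', i < i' → (l i / p ^ j) % p ≠ p - 1 → (l i' / p ^ j) % p = 0

/-- `carry p n β i` is `c_{i+1}(β)`, the amount carried past the `p^(i+1)`-column when
`β 0, …, β (n-1)` are added in base `p`. -/
def carry (p n : ℕ) (β : ℕ → ℕ) (i : ℕ) : ℕ :=
  (∑ j ∈ Finset.range n, β j % p ^ (i + 1)) / p ^ (i + 1)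

/-- `Dominates l m` : `l` dominates `m`, i.e. `m ⊴ l`. -/
def Dominates (l m : ℕ → ℕ) : Prop :=
  ∀ k, ∑ i ∈ Finset.range k, m i ≤ ∑ i ∈ Finset.range k, l i

/-- `lpexp p t` is the least nonnegative integer `l` with `t < p ^ l`. -/
noncomputable def lpexp (p t : ℕ) : ℕ := sInf {l : ℕ | t < p ^ l}

/-- James' condition: consecutive parts satisfy `λ_i ≡ -1 (mod p ^ lpexp p (λ_{i+1}))`
(indices `0 ≤ i`, `i + 1 < n` in 0-based indexing). -/
def JamesCondition (p n : ℕ) (l : ℕ → ℕ) : Prop :=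
  ∀ i, i + 1 < n → p ^ lpexp p (l (i + 1)) ∣ l i + 1


namespace JamesAux

/-- geometric sum -/
lemma geom_sum {p : ℕ} (hp : 1 ≤ p) (m : ℕ) :
    (∑ v ∈ Finset.range m, (p-1)*p^v) + 1 = p^m := by
  induction m with
  | zero => simp
  | succ m ih =>
    rw [Finset.sum_range_succ, pow_succ]
    have h1 : ((p-1)+1) * p^m = p^m * p := by rw [Nat.sub_add_cancel hp]; ring
    have h2 : ((p-1)+1) * p^m = (p-1)*p^m + p^m := by ring
    omega

lemma geom_Ico {p : ℕ} (hp : 1 ≤ p) {a b : ℕ} (hab : a ≤ b) :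
    p^a + ∑ v ∈ Finset.Ico a b, (p-1)*p^v = p^b := by
  have h1 := geom_sum hp a
  have h2 := geom_sum hp b
  have h3 : (∑ v ∈ Finset.Ico 0 a, (p-1)*p^v) + ∑ v ∈ Finset.Ico a b, (p-1)*p^v
      = ∑ v ∈ Finset.Ico 0 b, (p-1)*p^v := Finset.sum_Ico_consecutive _ (Nat.zero_le a) hab
  rw [Finset.range_eq_Ico] at h1 h2
  omega

/-- x % (a*b) decomposition -/
lemma mod_mul_decomp (x a b : ℕ) (ha : 0 < a) (hb : 0 < b) :
    x % (a*b) = a * (x / a % b) + x % a := by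
  have h1 := Nat.div_add_mod x a
  have h2 := Nat.div_add_mod (x / a) b
  have h3 : x = (a*b) * (x / a / b) + (a * (x / a % b) + x % a) := by
    nlinarith [h1, h2]
  have h4 : a * (x / a % b) + x % a < a * b := by
    have := Nat.mod_lt (x / a) hb
    have := Nat.mod_lt x ha
    nlinarith
  conv_lhs => rw [h3]
  rw [Nat.add_comm ((a*b) * (x / a / b)), Nat.add_mul_mod_self_left,
    Nat.mod_eq_of_lt h4]

/-- base-p expansion of x % p^m -/
lemma mod_pow_eq_sum {p : ℕ} (hp : 1 ≤ p) (x m : ℕ) :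
    x % p^m = ∑ v ∈ Finset.range m, (x / p^v % p) * p^v := by
  induction m with
  | zero => simp [Nat.mod_one]
  | succ m ih =>
    rw [Finset.sum_range_succ, pow_succ,
      mod_mul_decomp x (p^m) p ((Nat.pow_pos (n := m) hp)) hp, ← ih]
    ring

lemma digit_le {p : ℕ} (hp : 1 ≤ p) (x v : ℕ) : x / p^v % p ≤ p - 1 := by
  have := Nat.mod_lt (x / p^v) hp
  omega

/-- sum of digits with coefficients < p is < p^L -/
lemma sum_digits_lt {p : ℕ} (hp : 1 ≤ p) (c : ℕ → ℕ) (hc : ∀ v, c v ≤ p - 1) (L : ℕ) :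
    ∑ v ∈ Finset.range L, c v * p^v < p^L := by
  have h1 : ∑ v ∈ Finset.range L, c v * p^v ≤ ∑ v ∈ Finset.range L, (p-1) * p^v := by
    apply Finset.sum_le_sum
    intro v _
    exact Nat.mul_le_mul_right _ (hc v)
  have := geom_sum hp L
  omega

lemma mod_of_digit_sum {p : ℕ} (hp : 1 ≤ p) (c : ℕ → ℕ) (hc : ∀ v, c v ≤ p - 1)
    {L m : ℕ} (hm : m ≤ L) :
    (∑ v ∈ Finset.range L, c v * p^v) % p^m = ∑ v ∈ Finset.range m, c v * p^v := by
  have hsplit : ∑ v ∈ Finset.range L, c v * p^v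
      = (∑ v ∈ Finset.range m, c v * p^v) + ∑ v ∈ Finset.Ico m L, c v * p^v := by
    rw [Finset.range_eq_Ico, ← Finset.sum_Ico_consecutive _ (Nat.zero_le m) hm,
      ← Finset.range_eq_Ico]
  have hfac : ∑ v ∈ Finset.Ico m L, c v * p^v
      = p^m * ∑ w ∈ Finset.range (L - m), c (m+w) * p^w := by
    rw [Finset.sum_Ico_eq_sum_range, Finset.mul_sum]
    apply Finset.sum_congr rfl
    intro w _
    rw [pow_add]
    ring
  rw [hsplit, hfac, Nat.add_mul_mod_self_left,
    Nat.mod_eq_of_lt (sum_digits_lt hp c hc m)]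

lemma digit_of_digit_sum {p : ℕ} (hp : 1 ≤ p) (c : ℕ → ℕ) (hc : ∀ v, c v ≤ p - 1)
    {L m : ℕ} (hm : m < L) :
    (∑ v ∈ Finset.range L, c v * p^v) / p^m % p = c m := by
  set x := ∑ v ∈ Finset.range L, c v * p^v with hx
  have h1 : x % (p^m * p) / p^m = x / p^m % p := Nat.mod_mul_right_div_self x (p^m) p
  rw [← h1, ← pow_succ, mod_of_digit_sum hp c hc (by omega : m+1 ≤ L),
    Finset.sum_range_succ, Nat.add_mul_div_right _ _ ((Nat.pow_pos (n := m) hp)),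
    Nat.div_eq_of_lt (sum_digits_lt hp c hc m)]
  have := hc m
  omega

lemma digit_high_of_digit_sum {p : ℕ} (hp : 1 ≤ p) (c : ℕ → ℕ) (hc : ∀ v, c v ≤ p - 1)
    {L m : ℕ} (hm : L ≤ m) :
    (∑ v ∈ Finset.range L, c v * p^v) / p^m % p = 0 := by
  rw [Nat.div_eq_of_lt]
  · simp
  · calc ∑ v ∈ Finset.range L, c v * p^v < p^L := sum_digits_lt hp c hc L
      _ ≤ p^m := Nat.pow_le_pow_right hp hm

/-- telescoping sum for reconstructed digits -/
lemma Dsum (p s k : ℕ) :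
    ∑ t ∈ Finset.range k, min (p-1) (s - (p-1)*t) = min s ((p-1)*k) := by
  induction k with
  | zero => simp
  | succ k ih =>
    rw [Finset.sum_range_succ, ih, Nat.mul_succ]
    omega



section
variable {p n : ℕ}

/-- sum of mods as weighted column sums -/
lemma sum_mod_eq_cols (hp : 1 ≤ p) (β : ℕ → ℕ) (m : ℕ) :
    ∑ t ∈ Finset.range n, β t % p^m
      = ∑ v ∈ Finset.range m, (∑ t ∈ Finset.range n, β t / p^v % p) * p^v := by
  have h : ∀ t ∈ Finset.range n, β t % p^m
      = ∑ v ∈ Finset.range m, (β t / p^v % p) * p^v := by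
    intro t _
    exact mod_pow_eq_sum hp (β t) m
  rw [Finset.sum_congr rfl h, Finset.sum_comm]
  apply Finset.sum_congr rfl
  intro v _
  rw [Finset.sum_mul]

/-- the carry in terms of column sums -/
lemma carry_eq (hp : 1 ≤ p) (β : ℕ → ℕ) (i : ℕ) :
    carry p n β i
      = (∑ v ∈ Finset.range (i+1), (∑ t ∈ Finset.range n, β t / p^v % p) * p^v) / p^(i+1) := by
  rw [carry, sum_mod_eq_cols hp]

/-- Column prefix sums for a Doty partition -/
lemma col_prefix (hp : 2 ≤ p) {lam : ℕ → ℕ} (hD : DotyCondition p lam)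
    (v : ℕ) {k : ℕ} (hk : k ≤ n) :
    ∑ t ∈ Finset.range k, lam t / p^v % p
      = min (∑ t ∈ Finset.range n, lam t / p^v % p) ((p-1)*k) := by
  by_cases hall : ∀ t < k, lam t / p^v % p = p - 1
  · have h1 : ∑ t ∈ Finset.range k, lam t / p^v % p = (p-1)*k := by
      rw [Finset.sum_congr rfl (fun t ht => hall t (Finset.mem_range.mp ht))]
      simp [Finset.sum_const, Nat.mul_comm]
    have h2 : (p-1)*k ≤ ∑ t ∈ Finset.range n, lam t / p^v % p := by
      calc (p-1)*k = ∑ t ∈ Finset.range k, lam t / p^v % p := h1.symm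
        _ ≤ ∑ t ∈ Finset.range n, lam t / p^v % p := by
            apply Finset.sum_le_sum_of_subset
            exact Finset.range_subset_range.mpr hk
    rw [h1]
    exact (min_eq_right h2).symm
  · push_neg at hall
    have hne : {t | t < k ∧ lam t / p^v % p ≠ p - 1}.Nonempty := by
      obtain ⟨t, ht1, ht2⟩ := hall
      exact ⟨t, ht1, ht2⟩
    obtain ⟨t0, ⟨ht0k, ht0d⟩, ht0min⟩ :
        ∃ t0, (t0 < k ∧ lam t0 / p^v % p ≠ p - 1) ∧
          ∀ t, t < t0 → ¬(t < k ∧ lam t / p^v % p ≠ p - 1) :=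
      ⟨sInf {t | t < k ∧ lam t / p^v % p ≠ p - 1}, Nat.sInf_mem hne,
        fun t ht => Nat.notMem_of_lt_sInf ht⟩
    have hmin : ∀ t < t0, lam t / p^v % p = p - 1 := by
      intro t ht
      by_contra hc
      exact ht0min t ht ⟨by omega, hc⟩
    have hzero : ∀ t, t0 < t → lam t / p^v % p = 0 := fun t ht => hD t0 v t ht ht0d
    -- both prefix sums equal (p-1)*t0 + d(t0)
    have key : ∀ K, t0 < K → ∑ t ∈ Finset.range K, lam t / p^v % p
        = (p-1)*t0 + lam t0 / p^v % p := by
      intro K hK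
      have hsplit : Finset.range K = Finset.range (t0+1) ∪ Finset.Ico (t0+1) K := by
        rw [Finset.range_eq_Ico, ← Finset.Ico_union_Ico_eq_Ico (Nat.zero_le (t0+1)) (by omega),
          ← Finset.range_eq_Ico]
      rw [hsplit, Finset.sum_union]
      · rw [Finset.sum_range_succ, Finset.sum_congr rfl
          (fun t ht => hmin t (Finset.mem_range.mp ht)),
          Finset.sum_const, Finset.card_range, smul_eq_mul]
        have hz : ∑ t ∈ Finset.Ico (t0+1) K, lam t / p^v % p = 0 := by
          apply Finset.sum_eq_zero
          intro t ht
          exact hzero t (by have := Finset.mem_Ico.mp ht; omega)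
        rw [Nat.mul_comm (p-1) t0]
        omega
      · rw [Finset.range_eq_Ico]
        apply Finset.Ico_disjoint_Ico_consecutive
    have h1 := key k ht0k
    have h2 := key n (by omega)
    have hd : lam t0 / p^v % p ≤ p - 2 := by
      have h5 := Nat.mod_lt (lam t0 / p^v) (show 0 < p by omega)
      have h6 := ht0d
      omega
    have hlt : (p-1)*t0 + lam t0 / p^v % p < (p-1)*k := by
      have hmul : (p-1)*(t0+1) ≤ (p-1)*k := Nat.mul_le_mul_left _ (by omega)
      have h3 : (p-1)*(t0+1) = (p-1)*t0 + (p-1) := by ring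
      have h4 : (p-1)*t0 + lam t0 / p^v % p < (p-1)*t0 + (p-1) :=
        Nat.add_lt_add_left (by omega) _
      exact h4.trans_le (h3 ▸ hmul)
    rw [h1, h2]
    exact (min_eq_left hlt.le).symm

end

lemma lt_pow_lpexp {p : ℕ} (hp2 : 2 ≤ p) (x : ℕ) : x < p ^ lpexp p x := by
  have hne : {l : ℕ | x < p^l}.Nonempty :=
    ⟨x, lt_of_lt_of_le ((Nat.lt_two_pow_self (n := x))) (Nat.pow_le_pow_left (by omega) x)⟩
  exact Nat.sInf_mem hne

lemma lpexp_le {p x l : ℕ} (h : x < p^l) : lpexp p x ≤ l := Nat.sInf_le h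

lemma carry_le_forward {p n d : ℕ} (hp2 : 2 ≤ p) {lam mu : ℕ → ℕ}
    (hlam : IsPartition n d lam) (hJ : JamesCondition p n lam)
    (hmu : IsPartition n d mu) (hdom : Dominates mu lam) (i : ℕ) :
    carry p n mu i ≤ carry p n lam i := by
  set q := p^(i+1) with hqdef
  have hq : 2 ≤ q := by
    calc 2 ≤ p := hp2
      _ = p^1 := (pow_one p).symm
      _ ≤ p^(i+1) := Nat.pow_le_pow_right (by omega) (by omega)
  -- carry in terms of total digit-sums
  have key : ∀ β : ℕ → ℕ, IsPartition n d β →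
      carry p n β i = d / q - ∑ t ∈ Finset.range n, β t / q := by
    intro β hβ
    have hid : (∑ t ∈ Finset.range n, β t % q) + q * (∑ t ∈ Finset.range n, β t / q) = d := by
      rw [Finset.mul_sum, ← Finset.sum_add_distrib]
      rw [← hβ.2.2]
      apply Finset.sum_congr rfl
      intro t _
      exact Nat.mod_add_div (β t) q
    have h2 : q * (∑ t ∈ Finset.range n, β t / q) ≤ d := by omega
    have h3 : ∑ t ∈ Finset.range n, β t % q = d - q * (∑ t ∈ Finset.range n, β t / q) := by
      omega
    rw [carry, ← hqdef, h3, Nat.sub_mul_div _ _ _]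
  rw [key lam hlam, key mu hmu]
  apply Nat.sub_le_sub_left
  -- main claim: sum of lam-quotients ≤ sum of mu-quotients
  have hset : ({t : ℕ | lam t < q} : Set ℕ).Nonempty := ⟨n, by
    have := hlam.2.1 n le_rfl
    simp only [Set.mem_setOf_eq, this]
    omega⟩
  obtain ⟨k, hk1, hk2⟩ : ∃ k, lam k < q ∧ ∀ t, t < k → ¬ lam t < q :=
    ⟨sInf {t | lam t < q}, Nat.sInf_mem hset,
      fun t ht => Nat.notMem_of_lt_sInf (s := {t | lam t < q}) ht⟩
  have hkn : k ≤ n := by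
    by_contra h
    exact hk2 n (by omega) (by rw [hlam.2.1 n le_rfl]; omega)
  have htail0 : ∀ t, k ≤ t → lam t / q = 0 := fun t ht =>
    Nat.div_eq_of_lt (lt_of_le_of_lt (hlam.1 ht) hk1)
  have hSLk : ∑ t ∈ Finset.range n, lam t / q = ∑ t ∈ Finset.range k, lam t / q := by
    rw [Finset.range_eq_Ico, ← Finset.sum_Ico_consecutive _ (Nat.zero_le k) hkn,
      ← Finset.range_eq_Ico]
    have : ∑ t ∈ Finset.Ico k n, lam t / q = 0 :=
      Finset.sum_eq_zero (fun t ht => htail0 t (Finset.mem_Ico.mp ht).1)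
    omega
  rw [hSLk]
  rcases Nat.eq_zero_or_pos k with hk0 | hkpos
  · subst hk0; simp
  obtain ⟨k', rfl⟩ : ∃ k', k = k' + 1 := ⟨k-1, by omega⟩
  -- James gives maximal residues above the threshold row
  have hmodq : ∀ t, t + 1 < k' + 1 → lam t % q = q - 1 := by
    intro t ht
    have ht1n : t + 1 < n := by omega
    have hlamq : q ≤ lam (t+1) := le_of_not_gt (hk2 (t+1) ht)
    have hle : i + 1 ≤ lpexp p (lam (t+1)) := by
      by_contra h
      push_neg at h
      have h1 : p ^ lpexp p (lam (t+1)) ≤ p ^ i :=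
        Nat.pow_le_pow_right (by omega) (by omega)
      have h2 : (p:ℕ) ^ i < p ^ (i+1) := Nat.pow_lt_pow_right (by omega) (by omega)
      have h3 := lt_pow_lpexp hp2 (lam (t+1))
      omega
    have hdvd : q ∣ lam t + 1 :=
      dvd_trans (pow_dvd_pow p hle) (hJ t ht1n)
    obtain ⟨m, hm⟩ := hdvd
    have hm0 : m ≠ 0 := by rintro rfl; simp at hm
    obtain ⟨m', rfl⟩ : ∃ m', m = m' + 1 := ⟨m-1, by omega⟩
    have hlamt : lam t = (q - 1) + q * m' := by
      have h4 : q * (m' + 1) = q * m' + q := by ring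
      omega
    rw [hlamt, Nat.add_mul_mod_self_left, Nat.mod_eq_of_lt (by omega)]
  -- decompose prefix sums
  have hlam_dec : ∑ t ∈ Finset.range (k'+1), lam t
      = q * (∑ t ∈ Finset.range (k'+1), lam t / q) + (k' * (q-1) + lam k' % q) := by
    rw [Finset.sum_range_succ, Finset.sum_range_succ]
    have h5 : ∑ t ∈ Finset.range k', lam t
        = ∑ t ∈ Finset.range k', (q * (lam t / q) + (q-1)) := by
      apply Finset.sum_congr rfl
      intro t ht
      have := hmodq t (by have := Finset.mem_range.mp ht; omega)
      have := Nat.mod_add_div (lam t) q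
      omega
    rw [h5, Finset.sum_add_distrib, Finset.sum_const, Finset.card_range, smul_eq_mul,
      ← Finset.mul_sum]
    have := Nat.mod_add_div (lam k') q
    have h6 : q * (∑ t ∈ Finset.range k', lam t / q + lam k' / q)
        = q * (∑ t ∈ Finset.range k', lam t / q) + q * (lam k' / q) := by ring
    omega
  have hmu_dec : ∑ t ∈ Finset.range (k'+1), mu t
      ≤ q * (∑ t ∈ Finset.range n, mu t / q) + (k'+1) * (q-1) := by
    have h7 : ∑ t ∈ Finset.range (k'+1), mu t
        ≤ ∑ t ∈ Finset.range (k'+1), (q * (mu t / q) + (q-1)) := by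
      apply Finset.sum_le_sum
      intro t _
      have := Nat.mod_add_div (mu t) q
      have := Nat.mod_lt (mu t) (show 0 < q by omega)
      omega
    have h8 : ∑ t ∈ Finset.range (k'+1), q * (mu t / q)
        ≤ q * (∑ t ∈ Finset.range n, mu t / q) := by
      rw [← Finset.mul_sum]
      apply Nat.mul_le_mul_left
      apply Finset.sum_le_sum_of_subset
      exact Finset.range_subset_range.mpr (by omega)
    rw [Finset.sum_add_distrib, Finset.sum_const, Finset.card_range, smul_eq_mul] at h7
    omega
  have hdomk := hdom (k'+1)
  -- conclude
  by_contra hAS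
  push_neg at hAS
  have h9 : q * (∑ t ∈ Finset.range n, mu t / q) + q
      ≤ q * (∑ t ∈ Finset.range (k'+1), lam t / q) := by
    have : (∑ t ∈ Finset.range n, mu t / q) + 1 ≤ ∑ t ∈ Finset.range (k'+1), lam t / q := hAS
    calc q * (∑ t ∈ Finset.range n, mu t / q) + q
        = q * ((∑ t ∈ Finset.range n, mu t / q) + 1) := by ring
      _ ≤ q * (∑ t ∈ Finset.range (k'+1), lam t / q) := Nat.mul_le_mul_left q this
  have h10 : (k'+1) * (q-1) = k' * (q-1) + (q-1) := by ring
  omega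


lemma dvd_of_all_digits_max {p : ℕ} (hp2 : 2 ≤ p) {x l : ℕ}
    (h : ∀ j, j < l → x / p^j % p = p - 1) : p^l ∣ x + 1 := by
  have h1 : x % p^l = p^l - 1 := by
    rw [mod_pow_eq_sum (by omega : 1 ≤ p) x l]
    have h2 : ∑ v ∈ Finset.range l, (x / p^v % p) * p^v
        = ∑ v ∈ Finset.range l, (p-1) * p^v := by
      apply Finset.sum_congr rfl
      intro v hv
      rw [h v (Finset.mem_range.mp hv)]
    rw [h2]
    have := geom_sum (by omega : 1 ≤ p) l
    omega
  have h3 := Nat.div_add_mod x (p^l)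
  refine ⟨x / p^l + 1, ?_⟩
  have h4 : p^l * (x / p^l + 1) = p^l * (x / p^l) + p^l := by ring
  have h5 : (1:ℕ) ≤ p^l := Nat.one_le_pow _ _ (by omega)
  omega

lemma backward_construction {p n d : ℕ} (hp2 : 2 ≤ p) {lam : ℕ → ℕ}
    (hlam : IsPartition n d lam) (hD : DotyCondition p lam)
    (hnJ : ¬ JamesCondition p n lam) :
    ∃ mu : ℕ → ℕ, IsPartition n d mu ∧ Dominates mu lam ∧ DotyCondition p mu ∧
      (∀ i, carry p n lam i ≤ carry p n mu i) ∧ carry p n mu ≠ carry p n lam := by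
  have hp1 : 1 ≤ p := by omega
  -- extract a digit failure
  rw [JamesCondition] at hnJ
  push_neg at hnJ
  obtain ⟨i, hi, hnd⟩ := hnJ
  obtain ⟨j0, hj0l, hj0d⟩ : ∃ j0, j0 < lpexp p (lam (i+1)) ∧ lam i / p^j0 % p ≠ p - 1 := by
    by_contra h
    push_neg at h
    exact hnd (dvd_of_all_digits_max hp2 (fun j hj => h j hj))
  have hpj0 : p^j0 ≤ lam (i+1) := by
    by_contra h
    push_neg at h
    exact absurd (lpexp_le h) (by omega)
  -- the top digit of lam (i+1)
  set u := Nat.log p (lam (i+1)) with hudef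
  have hlampos : 0 < lam (i+1) := lt_of_lt_of_le ((Nat.pow_pos (n := j0) (by omega))) hpj0
  have hu1 : p^u ≤ lam (i+1) := Nat.pow_log_le_self p (by omega)
  have hu2 : lam (i+1) < p^(u+1) := Nat.lt_pow_succ_log_self (by omega) _
  have hdu : lam (i+1) / p^u % p ≠ 0 := by
    have hq1 : 1 ≤ lam (i+1) / p^u := (Nat.one_le_div_iff ((Nat.pow_pos (n := u) (by omega)))).mpr hu1
    have hq2 : lam (i+1) / p^u < p := by
      rw [Nat.div_lt_iff_lt_mul ((Nat.pow_pos (n := u) (by omega)))]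
      calc lam (i+1) < p^(u+1) := hu2
        _ = p * p^u := by ring
    rw [Nat.mod_eq_of_lt hq2]
    omega
  have hj0u : j0 ≤ u := by
    by_contra h
    push_neg at h
    have : p^(u+1) ≤ p^j0 := Nat.pow_le_pow_right (by omega) (by omega)
    omega
  -- column sums
  set σ : ℕ → ℕ := fun v => ∑ t ∈ Finset.range n, lam t / p^v % p with hσdef
  have hσbd : ∀ v, σ v ≤ (p-1)*n := by
    intro v
    rw [hσdef]
    calc ∑ t ∈ Finset.range n, lam t / p^v % p ≤ ∑ _t ∈ Finset.range n, (p-1) :=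
        Finset.sum_le_sum (fun t _ => digit_le hp1 (lam t) v)
      _ = (p-1)*n := by rw [Finset.sum_const, Finset.card_range, smul_eq_mul, Nat.mul_comm]
  -- the low failing column
  have hσj0 : σ j0 < (p-1)*(i+1) := by
    have hsplit : σ j0 = ∑ t ∈ Finset.range (i+1), lam t / p^j0 % p := by
      rw [hσdef]
      simp only
      rw [Finset.range_eq_Ico, ← Finset.sum_Ico_consecutive _ (Nat.zero_le (i+1)) (by omega : i+1 ≤ n),
        ← Finset.range_eq_Ico]
      have hz : ∑ t ∈ Finset.Ico (i+1) n, lam t / p^j0 % p = 0 :=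
        Finset.sum_eq_zero (fun t ht => hD i j0 t (by have := (Finset.mem_Ico.mp ht).1; omega) hj0d)
      omega
    have h1 : ∑ t ∈ Finset.range i, lam t / p^j0 % p ≤ (p-1)*i := by
      calc ∑ t ∈ Finset.range i, lam t / p^j0 % p ≤ ∑ _t ∈ Finset.range i, (p-1) :=
          Finset.sum_le_sum (fun t _ => digit_le hp1 (lam t) j0)
        _ = (p-1)*i := by rw [Finset.sum_const, Finset.card_range, smul_eq_mul, Nat.mul_comm]
    have h2 : lam i / p^j0 % p ≤ p - 2 := by
      have := Nat.mod_lt (lam i / p^j0) (show 0 < p by omega)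
      omega
    have h3 : (p-1)*(i+1) = (p-1)*i + (p-1) := by ring
    rw [hsplit, Finset.sum_range_succ]
    omega
  -- the high heavy column
  have hσu : (p-1)*(i+1) < σ u := by
    have hfull : ∀ t, t < i+1 → lam t / p^u % p = p - 1 := by
      intro t ht
      by_contra hne
      exact hdu (hD t u (i+1) ht hne)
    have hsub : ∑ t ∈ Finset.range (i+2), lam t / p^u % p ≤ σ u := by
      rw [hσdef]
      exact Finset.sum_le_sum_of_subset (Finset.range_subset_range.mpr (by omega))
    have h1 : ∑ t ∈ Finset.range (i+1), lam t / p^u % p = (p-1)*(i+1) := by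
      rw [Finset.sum_congr rfl (fun t ht => hfull t (Finset.mem_range.mp ht)),
        Finset.sum_const, Finset.card_range, smul_eq_mul, Nat.mul_comm]
    rw [Finset.sum_range_succ, h1] at hsub
    omega
  have hj0u' : j0 < u := by
    rcases Nat.lt_or_ge j0 u with h | h
    · exact h
    · have : j0 = u := by omega
      subst this
      omega
  -- minimal failing upper column J2
  have hS''ne : (∃ k, 1 ≤ k ∧ k ≤ n-1 ∧ ∃ v, v < u ∧ σ v < (p-1)*k ∧ (p-1)*k < σ u) :=
    ⟨i+1, by omega, by omega, j0, hj0u', hσj0, hσu⟩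
  set S'' : Set ℕ := {w | ∃ k, 1 ≤ k ∧ k ≤ n-1 ∧ ∃ v, v < w ∧ σ v < (p-1)*k ∧ (p-1)*k < σ w}
    with hS''def
  obtain ⟨J2, hJ2mem, hJ2min⟩ : ∃ J2, J2 ∈ S'' ∧ ∀ w, w < J2 → w ∉ S'' :=
    ⟨sInf S'', Nat.sInf_mem ⟨u, hS''ne⟩, fun w hw => Nat.notMem_of_lt_sInf hw⟩
  obtain ⟨k1, hk1a, hk1b, v1, hv1, hσv1, hσJ2k1⟩ := hJ2mem
  -- maximal multiple k0
  set KS : Set ℕ := {k | 1 ≤ k ∧ k ≤ n-1 ∧ ∃ v, v < J2 ∧ σ v < (p-1)*k ∧ (p-1)*k < σ J2}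
    with hKSdef
  have hKSne : KS.Nonempty := ⟨k1, hk1a, hk1b, v1, hv1, hσv1, hσJ2k1⟩
  have hKSbdd : BddAbove KS := ⟨n-1, fun k hk => hk.2.1⟩
  obtain ⟨hk01, hk0n, v0, hv0J, hσv0, hσk0⟩ := Nat.sSup_mem hKSne hKSbdd
  set k0 : ℕ := sSup KS with hk0def
  have hk0max : ∀ k, k ∈ KS → k ≤ k0 := fun k hk => le_csSup hKSbdd hk
  -- maximal low column j1
  set JS : Set ℕ := {v | v < J2 ∧ σ v < (p-1)*k0} with hJSdef
  have hJSne : JS.Nonempty := ⟨v0, hv0J, hσv0⟩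
  have hJSbdd : BddAbove JS := ⟨J2, fun v hv => le_of_lt hv.1⟩
  obtain ⟨hj1J2, hσj1⟩ := Nat.sSup_mem hJSne hJSbdd
  set j1 : ℕ := sSup JS with hj1def
  have hj1max : ∀ v, v ∈ JS → v ≤ j1 := fun v hv => le_csSup hJSbdd hv
  -- middles are exactly (p-1)*k0
  have hmid : ∀ v, j1 < v → v < J2 → σ v = (p-1)*k0 := by
    intro v h1 h2
    have ha : ¬ σ v < (p-1)*k0 := by
      intro h
      exact absurd (hj1max v ⟨h2, h⟩) (by omega)
    have hb : ¬ (p-1)*k0 < σ v := by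
      intro h
      exact hJ2min v h2 ⟨k0, hk01, hk0n, j1, h1, hσj1, h⟩
    omega
  -- sigma J2 is within one block above (p-1)*k0
  have hk0n1 : k0 + 1 ≤ n := by omega
  have hmulk01 : (p-1)*(k0+1) = (p-1)*k0 + (p-1) := by ring
  have heps : σ J2 ≤ (p-1)*k0 + (p-1) := by
    by_contra h
    push_neg at h
    have h1 : (p-1)*(k0+1) < σ J2 := by omega
    have h2 : (p-1)*(k0+1) < (p-1)*n := lt_of_lt_of_le h1 (hσbd J2)
    have h3 : k0 + 1 < n := Nat.lt_of_mul_lt_mul_left h2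
    have : k0 + 1 ∈ KS := ⟨by omega, by omega, j1, hj1J2, by omega, h1⟩
    exact absurd (hk0max _ this) (by omega)
  have hσJ2pos : (p-1)*k0 < σ J2 := hσk0
  -- length bound
  set L : ℕ := J2 + Nat.log p (lam 0) + 2 with hLdef
  have hJ2L : J2 < L := by omega
  have hLlam : ∀ t, lam t < p^L := by
    intro t
    calc lam t ≤ lam 0 := hlam.1 (Nat.zero_le t)
      _ < p^(Nat.log p (lam 0) + 1) := Nat.lt_pow_succ_log_self (by omega) _
      _ ≤ p^L := Nat.pow_le_pow_right (by omega) (by omega)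
  have hσL : ∀ v, L ≤ v → σ v = 0 := by
    intro v hv
    rw [hσdef]
    apply Finset.sum_eq_zero
    intro t _
    have : lam t < p^v := lt_of_lt_of_le (hLlam t) (Nat.pow_le_pow_right (by omega) hv)
    simp [Nat.div_eq_of_lt this]
  -- the modified column sums
  set σ' : ℕ → ℕ := fun v =>
    if v = J2 then σ J2 - 1
    else if v = j1 then σ j1 + p
    else if j1 < v ∧ v < J2 then (p-1)*k0 + (p-1)
    else σ v with hσ'def
  have hj1J2ne : j1 ≠ J2 := by omega
  have hev1 : σ' J2 = σ J2 - 1 := by simp [hσ'def]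
  have hev2 : σ' j1 = σ j1 + p := by simp [hσ'def, hj1J2ne]
  have hev3 : ∀ v, j1 < v → v < J2 → σ' v = (p-1)*k0 + (p-1) := by
    intro v h1 h2
    have hx1 : v ≠ J2 := by omega
    have hx2 : v ≠ j1 := by omega
    simp [hσ'def, hx1, hx2, h1, h2]
  have hev4 : ∀ v, v ≠ J2 → v ≠ j1 → ¬(j1 < v ∧ v < J2) → σ' v = σ v := by
    intro v h1 h2 h3
    simp [hσ'def, h1, h2, h3]
  have hσ'L : ∀ v, L ≤ v → σ' v = 0 := by
    intro v hv
    rw [hev4 v (by omega) (by omega) (by omega), hσL v hv]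
  have hσ'bd : ∀ v, σ' v ≤ (p-1)*n := by
    intro v
    have hmuln : (p-1)*(k0+1) ≤ (p-1)*n := Nat.mul_le_mul_left _ hk0n1
    by_cases h1 : v = J2
    · rw [h1, hev1]; have h9 := hσbd J2; omega
    by_cases h2 : v = j1
    · rw [h2, hev2]; omega
    by_cases h3 : j1 < v ∧ v < J2
    · rw [hev3 v h3.1 h3.2]; omega
    · rw [hev4 v h1 h2 h3]; exact hσbd v
  -- correction functions and their sums
  set g : ℕ → ℕ := fun v =>
    if v = j1 then p^(j1+1) else if j1 < v ∧ v < J2 then (p-1)*p^v else 0 with hgdef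
  have hgsum : ∀ m, j1 < m → ∑ v ∈ Finset.range m, g v
      = p^(j1+1) + ∑ v ∈ Finset.range m ∩ Finset.Ico (j1+1) J2, (p-1)*p^v := by
    intro m hm
    have hsplit : ∀ v, g v = (if v = j1 then p^(j1+1) else 0)
        + (if v ∈ Finset.Ico (j1+1) J2 then (p-1)*p^v else 0) := by
      intro v
      by_cases hv : v = j1
      · have hnotmem : v ∉ Finset.Ico (j1+1) J2 := by rw [Finset.mem_Ico]; omega
        simp [hgdef, hv, hnotmem]
      · simp only [hgdef, if_neg hv]
        by_cases h : j1 < v ∧ v < J2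
        · rw [if_pos h, if_pos (Finset.mem_Ico.mpr ⟨by omega, h.2⟩)]
          omega
        · rw [if_neg h, if_neg (by rw [Finset.mem_Ico]; omega)]
    rw [Finset.sum_congr rfl (fun v _ => hsplit v), Finset.sum_add_distrib]
    congr 1
    · rw [Finset.sum_ite_eq' (Finset.range m) j1 (fun _ => p^(j1+1)),
        if_pos (Finset.mem_range.mpr hm)]
    · exact Finset.sum_ite_mem (Finset.range m) (Finset.Ico (j1+1) J2) (fun v => (p-1)*p^v)
  have hgle : ∀ m, j1 < m → m ≤ J2 → ∑ v ∈ Finset.range m, g v = p^m := by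
    intro m h1 h2
    rw [hgsum m h1]
    have hint : Finset.range m ∩ Finset.Ico (j1+1) J2 = Finset.Ico (j1+1) m := by
      ext v
      simp only [Finset.mem_inter, Finset.mem_range, Finset.mem_Ico]
      omega
    rw [hint]
    exact geom_Ico hp1 (by omega)
  have hgfull : ∀ m, J2 ≤ m → ∑ v ∈ Finset.range m, g v = p^J2 := by
    intro m h2
    rw [hgsum m (by omega)]
    have hint : Finset.range m ∩ Finset.Ico (j1+1) J2 = Finset.Ico (j1+1) J2 := by
      ext v
      simp only [Finset.mem_inter, Finset.mem_range, Finset.mem_Ico]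
      omega
    rw [hint]
    exact geom_Ico hp1 (by omega)
  have hf1 : ∀ m, J2 < m → ∑ v ∈ Finset.range m, (if v = J2 then p^J2 else 0) = p^J2 := by
    intro m hm
    rw [Finset.sum_ite_eq' (Finset.range m) J2 (fun _ => p^J2), if_pos (Finset.mem_range.mpr hm)]
  -- pointwise master identity
  have hpoint : ∀ v, σ' v * p^v + (if v = J2 then p^J2 else 0) = σ v * p^v + g v := by
    intro v
    by_cases h1 : v = J2
    · rw [h1, hev1, if_pos rfl]
      have hg0 : g J2 = 0 := by simp [hgdef, hj1J2ne.symm]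
      rw [hg0]
      have h4 : σ J2 = (σ J2 - 1) + 1 := by omega
      calc (σ J2 - 1) * p^J2 + p^J2 = ((σ J2 - 1) + 1) * p^J2 := by ring
        _ = σ J2 * p^J2 + 0 := by rw [← h4]; ring
    by_cases h2 : v = j1
    · rw [h2, hev2, if_neg hj1J2ne]
      have hg1 : g j1 = p^(j1+1) := by simp [hgdef]
      rw [hg1]
      ring
    by_cases h3 : j1 < v ∧ v < J2
    · rw [hev3 v h3.1 h3.2, if_neg h1]
      have hg2 : g v = (p-1)*p^v := by simp [hgdef, h2, h3]
      rw [hg2, hmid v h3.1 h3.2]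
      ring
    · rw [hev4 v h1 h2 h3, if_neg h1]
      have hg3 : g v = 0 := by simp [hgdef, h2, h3]
      rw [hg3]
  -- weight preservation
  have hW : ∑ v ∈ Finset.range L, σ' v * p^v = ∑ v ∈ Finset.range L, σ v * p^v := by
    have h1 : ∑ v ∈ Finset.range L, (σ' v * p^v + (if v = J2 then p^J2 else 0))
        = ∑ v ∈ Finset.range L, (σ v * p^v + g v) :=
      Finset.sum_congr rfl (fun v _ => hpoint v)
    rw [Finset.sum_add_distrib, Finset.sum_add_distrib, hf1 L (by omega),
      hgfull L (by omega)] at h1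
    omega
  -- the new partition
  set mu : ℕ → ℕ := fun t => ∑ v ∈ Finset.range L, (min (p-1) (σ' v - (p-1)*t)) * p^v
    with hmudef
  have hclebd : ∀ t v, min (p-1) (σ' v - (p-1)*t) ≤ p - 1 := fun t v => Nat.min_le_left _ _
  have hdigit : ∀ t v, mu t / p^v % p
      = if v < L then min (p-1) (σ' v - (p-1)*t) else 0 := by
    intro t v
    by_cases hv : v < L
    · rw [if_pos hv]
      simp only [hmudef]
      exact digit_of_digit_sum hp1 _ (fun w => hclebd t w) hv
    · rw [if_neg hv]
      simp only [hmudef]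
      exact digit_high_of_digit_sum hp1 _ (fun w => hclebd t w) (by omega)
  have hmucol : ∀ v, (∑ t ∈ Finset.range n, mu t / p^v % p) = σ' v := by
    intro v
    by_cases hv : v < L
    · have h1 : ∀ t ∈ Finset.range n, mu t / p^v % p = min (p-1) (σ' v - (p-1)*t) := by
        intro t _
        rw [hdigit t v, if_pos hv]
      rw [Finset.sum_congr rfl h1, Dsum]
      exact min_eq_left (hσ'bd v)
    · have h1 : ∀ t ∈ Finset.range n, mu t / p^v % p = 0 := by
        intro t _
        rw [hdigit t v, if_neg hv]
      rw [Finset.sum_congr rfl h1, Finset.sum_const, smul_eq_mul, Nat.mul_zero,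
        hσ'L v (by omega)]
  have hmupre : ∀ k, ∑ t ∈ Finset.range k, mu t
      = ∑ v ∈ Finset.range L, (min (σ' v) ((p-1)*k)) * p^v := by
    intro k
    simp only [hmudef]
    rw [Finset.sum_comm]
    apply Finset.sum_congr rfl
    intro v _
    rw [← Finset.sum_mul, Dsum]
  have hlamdig : ∀ t, lam t = ∑ v ∈ Finset.range L, (lam t / p^v % p) * p^v := by
    intro t
    have h1 := mod_pow_eq_sum hp1 (lam t) L
    rw [Nat.mod_eq_of_lt (hLlam t)] at h1
    exact h1
  have hlampre : ∀ k, k ≤ n → ∑ t ∈ Finset.range k, lam t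
      = ∑ v ∈ Finset.range L, (min (σ v) ((p-1)*k)) * p^v := by
    intro k hk
    rw [Finset.sum_congr rfl (fun t _ => hlamdig t), Finset.sum_comm]
    apply Finset.sum_congr rfl
    intro v _
    rw [← Finset.sum_mul]
    congr 1
    exact col_prefix hp2 hD v hk
  have hd_eq : ∑ v ∈ Finset.range L, σ v * p^v = d := by
    have h1 := hlampre n le_rfl
    have h2 : ∀ v ∈ Finset.range L, (min (σ v) ((p-1)*n)) * p^v = σ v * p^v := by
      intro v _; rw [min_eq_left (hσbd v)]
    rw [Finset.sum_congr rfl h2] at h1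
    rw [← h1, hlam.2.2]
  have hmutot : ∑ t ∈ Finset.range n, mu t = d := by
    rw [hmupre n]
    have h2 : ∀ v ∈ Finset.range L, (min (σ' v) ((p-1)*n)) * p^v = σ' v * p^v := by
      intro v _; rw [min_eq_left (hσ'bd v)]
    rw [Finset.sum_congr rfl h2, hW, hd_eq]
  have hmuzero : ∀ t, n ≤ t → mu t = 0 := by
    intro t ht
    simp only [hmudef]
    apply Finset.sum_eq_zero
    intro v _
    have h3 : (p-1)*n ≤ (p-1)*t := Nat.mul_le_mul_left _ ht
    have h4 : min (p-1) (σ' v - (p-1)*t) = 0 := by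
      have := hσ'bd v
      omega
    rw [h4, Nat.zero_mul]
  have hmuanti : Antitone mu := by
    intro a b hab
    simp only [hmudef]
    apply Finset.sum_le_sum
    intro v _
    apply Nat.mul_le_mul_right
    have h5 : (p-1)*a ≤ (p-1)*b := Nat.mul_le_mul_left _ hab
    omega
  have hmuP : IsPartition n d mu := ⟨hmuanti, hmuzero, hmutot⟩
  have hmuD : DotyCondition p mu := by
    intro t v t' htt' hne
    rw [hdigit t v] at hne
    rw [hdigit t' v]
    by_cases hv : v < L
    · rw [if_pos hv] at hne ⊢
      have h6 : (p-1)*(t+1) ≤ (p-1)*t' := Nat.mul_le_mul_left _ (by omega)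
      have h7 : (p-1)*(t+1) = (p-1)*t + (p-1) := by ring
      omega
    · rw [if_neg hv]
  have hdom : Dominates mu lam := by
    intro k
    rcases le_or_gt n k with hk | hk
    · have h8 : ∑ t ∈ Finset.range k, lam t = ∑ t ∈ Finset.range n, lam t := by
        rw [Finset.range_eq_Ico, ← Finset.sum_Ico_consecutive _ (Nat.zero_le n) hk,
          ← Finset.range_eq_Ico]
        have hz : ∑ t ∈ Finset.Ico n k, lam t = 0 :=
          Finset.sum_eq_zero (fun t ht => hlam.2.1 t (Finset.mem_Ico.mp ht).1)
        omega
      have h9 : ∑ t ∈ Finset.range k, mu t = ∑ t ∈ Finset.range n, mu t := by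
        rw [Finset.range_eq_Ico, ← Finset.sum_Ico_consecutive _ (Nat.zero_le n) hk,
          ← Finset.range_eq_Ico]
        have hz : ∑ t ∈ Finset.Ico n k, mu t = 0 :=
          Finset.sum_eq_zero (fun t ht => hmuzero t (Finset.mem_Ico.mp ht).1)
        omega
      rw [h8, h9, hlam.2.2, hmutot]
    · rw [hlampre k (by omega), hmupre k]
      rcases le_or_gt k k0 with hkk | hkk
      · apply Finset.sum_le_sum
        intro v _
        apply Nat.mul_le_mul_right
        have hKle : (p-1)*k ≤ (p-1)*k0 := Nat.mul_le_mul_left _ hkk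
        by_cases h1 : v = J2
        · rw [h1, hev1]
          omega
        by_cases h2 : v = j1
        · rw [h2, hev2]
          omega
        by_cases h3 : j1 < v ∧ v < J2
        · rw [hev3 v h3.1 h3.2, hmid v h3.1 h3.2]
          omega
        · rw [hev4 v h1 h2 h3]
      · have hKge : (p-1)*k0 + (p-1) ≤ (p-1)*k := by
          have h10 : (p-1)*(k0+1) ≤ (p-1)*k := Nat.mul_le_mul_left _ (by omega)
          omega
        have hptw : ∀ v ∈ Finset.range L,
            (min (σ v) ((p-1)*k)) * p^v + g v
            ≤ (min (σ' v) ((p-1)*k)) * p^v + (if v = J2 then p^J2 else 0) := by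
          intro v _
          by_cases h1 : v = J2
          · rw [h1, hev1, if_pos rfl]
            have hg0 : g J2 = 0 := by simp [hgdef, hj1J2ne.symm]
            rw [hg0]
            have hmle : min (σ J2) ((p-1)*k) ≤ min (σ J2 - 1) ((p-1)*k) + 1 := by omega
            calc (min (σ J2) ((p-1)*k)) * p^J2 + 0 = (min (σ J2) ((p-1)*k)) * p^J2 := by ring
              _ ≤ (min (σ J2 - 1) ((p-1)*k) + 1) * p^J2 := Nat.mul_le_mul_right _ hmle
              _ = (min (σ J2 - 1) ((p-1)*k)) * p^J2 + p^J2 := by ring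
          by_cases h2 : v = j1
          · rw [h2, hev2, if_neg hj1J2ne]
            have hg1 : g j1 = p^(j1+1) := by simp [hgdef]
            rw [hg1, min_eq_left (by omega), min_eq_left (by omega)]
            exact le_of_eq (by ring)
          by_cases h3 : j1 < v ∧ v < J2
          · rw [hev3 v h3.1 h3.2, hmid v h3.1 h3.2, if_neg h1]
            have hg2 : g v = (p-1)*p^v := by simp [hgdef, h2, h3]
            rw [hg2, min_eq_left (by omega), min_eq_left (by omega)]
            exact le_of_eq (by ring)
          · rw [hev4 v h1 h2 h3, if_neg h1]
            have hg3 : g v = 0 := by simp [hgdef, h2, h3]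
            rw [hg3]
        have hsum := Finset.sum_le_sum hptw
        rw [Finset.sum_add_distrib, Finset.sum_add_distrib, hgfull L (by omega),
          hf1 L (by omega)] at hsum
        omega
  -- carry comparison
  have hcarry_lam : ∀ i', carry p n lam i'
      = (∑ v ∈ Finset.range (i'+1), σ v * p^v) / p^(i'+1) := fun i' => carry_eq hp1 lam i'
  have hcarry_mu : ∀ i', carry p n mu i'
      = (∑ v ∈ Finset.range (i'+1), σ' v * p^v) / p^(i'+1) := by
    intro i'
    rw [carry_eq hp1 mu i']
    congr 1
    exact Finset.sum_congr rfl (fun v _ => by rw [hmucol v])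
  have hfact2 : ∀ m, j1 < m → m ≤ J2 →
      ∑ v ∈ Finset.range m, σ' v * p^v = (∑ v ∈ Finset.range m, σ v * p^v) + p^m := by
    intro m h1 h2
    have hpw : ∀ v ∈ Finset.range m, σ' v * p^v = σ v * p^v + g v := by
      intro v hv
      have h3 := hpoint v
      rw [if_neg (by have := Finset.mem_range.mp hv; omega)] at h3
      omega
    rw [Finset.sum_congr rfl hpw, Finset.sum_add_distrib, hgle m h1 h2]
  have hfact3 : ∀ m, J2 < m →
      ∑ v ∈ Finset.range m, σ' v * p^v = ∑ v ∈ Finset.range m, σ v * p^v := by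
    intro m h1
    have hsum : ∑ v ∈ Finset.range m, (σ' v * p^v + (if v = J2 then p^J2 else 0))
        = ∑ v ∈ Finset.range m, (σ v * p^v + g v) :=
      Finset.sum_congr rfl (fun v _ => hpoint v)
    rw [Finset.sum_add_distrib, Finset.sum_add_distrib, hf1 m h1, hgfull m (by omega)] at hsum
    omega
  have hcarrycmp : ∀ i', carry p n lam i' ≤ carry p n mu i' := by
    intro i'
    rw [hcarry_lam, hcarry_mu]
    rcases le_or_gt (i'+1) j1 with h1 | h1
    · have hcongr : ∑ v ∈ Finset.range (i'+1), σ' v * p^v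
          = ∑ v ∈ Finset.range (i'+1), σ v * p^v :=
        Finset.sum_congr rfl (fun v hv => by
          rw [hev4 v (by have := Finset.mem_range.mp hv; omega)
            (by have := Finset.mem_range.mp hv; omega)
            (by have := Finset.mem_range.mp hv; omega)])
      rw [hcongr]
    · rcases le_or_gt (i'+1) J2 with h2 | h2
      · rw [hfact2 (i'+1) h1 h2, Nat.add_div_right _ ((Nat.pow_pos (n := _) (by omega)))]
        omega
      · rw [hfact3 (i'+1) h2]
  have hstrict : carry p n mu (J2-1) = carry p n lam (J2-1) + 1 := by
    have he : J2 - 1 + 1 = J2 := by omega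
    rw [hcarry_mu, hcarry_lam, he, hfact2 J2 hj1J2 le_rfl,
      Nat.add_div_right _ ((Nat.pow_pos (n := _) (by omega)))]
  refine ⟨mu, hmuP, hdom, hmuD, hcarrycmp, ?_⟩
  intro heq
  have h11 := congrFun heq (J2-1)
  omega



end JamesAux

open JamesAux in
theorem james_iff_no_strictly_dominating_doty_with_bigger_carry
    (p n d : ℕ) (hp : p.Prime) (lam : ℕ → ℕ)
    (hlam : IsPartition n d lam) (hD : DotyCondition p lam) :
    JamesCondition p n lam ↔
      ¬ ∃ mu : ℕ → ℕ, IsPartition n d mu ∧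
        Dominates mu lam ∧ mu ≠ lam ∧
        DotyCondition p mu ∧
        ((∀ i, carry p n lam i ≤ carry p n mu i) ∧ carry p n mu ≠ carry p n lam) := by
  have hp2 : 2 ≤ p := hp.two_le
  constructor
  · rintro hJ ⟨mu, hmuP, hdom, hne, hmuD, hcle, hcne⟩
    exact hcne (funext (fun i => le_antisymm
      (carry_le_forward hp2 hlam hJ hmuP hdom i) (hcle i)))
  · intro hno
    by_contra hnJ
    obtain ⟨mu, hmuP, hdom, hmuD, hcmp, hcne⟩ := backward_construction hp2 hlam hD hnJ
    exact hno ⟨mu, hmuP, hdom, fun h => hcne (by rw [h]), hmuD, hcmp, hcne⟩
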